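/- Let p(t) := min(−t, 1). Then p is concave on ℝ, and for any Hermitian-matrix-valued integrable random variable Y, 𝔼 tr p(Y) ≤ tr p(𝔼Y). -/

import Mathlib

open Matrix
open scoped ComplexOrder

/-- Spectral functional calculus for Hermitian matrices (junk value `0` otherwise). -/
noncomputable def matFun {d : ℕ} (f : ℝ → ℝ) (A : Matrix (Fin d) (Fin d) ℂ) :
    Matrix (Fin d) (Fin d) ℂ :=
  if hA : A.IsHermitian then
    (hA.eigenvectorUnitary : Matrix (Fin d) (Fin d) ℂ) *
      Matrix.diagonal (fun i => (f (hA.eigenvalues i) : ℂ)) *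
      (hA.eigenvectorUnitary : Matrix (Fin d) (Fin d) ℂ)ᴴ
  else 0

open MeasureTheory

namespace TrPJ

/-- The concave function in question. -/
def p (t : ℝ) : ℝ := min (-t) 1

lemma p_le_neg (t : ℝ) : p t ≤ -t := min_le_left _ _
lemma p_le_one (t : ℝ) : p t ≤ 1 := min_le_right _ _
lemma neg_le_p (t : ℝ) : -(1 + |t|) ≤ p t :=
  le_min (by linarith [le_abs_self t, abs_nonneg t]) (by linarith [abs_nonneg t])
lemma abs_p_le (t : ℝ) : |p t| ≤ 1 + |t| := by
  rw [abs_le]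
  exact ⟨neg_le_p t, le_trans (p_le_one t) (by linarith [abs_nonneg t])⟩

lemma sum_mul_p_le {ι : Type*} [Fintype ι] (c x : ι → ℝ)
    (hc : ∀ j, 0 ≤ c j) (hs : ∑ j, c j = 1) :
    ∑ j, c j * p (x j) ≤ p (∑ j, c j * x j) := by
  refine le_min ?_ ?_
  · have : ∑ j, c j * p (x j) ≤ ∑ j, c j * (-(x j)) :=
      Finset.sum_le_sum fun j _ => mul_le_mul_of_nonneg_left (p_le_neg _) (hc j)
    calc ∑ j, c j * p (x j) ≤ ∑ j, c j * (-(x j)) := this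
      _ = -∑ j, c j * x j := by simp [mul_neg, Finset.sum_neg_distrib]
  · calc ∑ j, c j * p (x j) ≤ ∑ j, c j * 1 :=
        Finset.sum_le_sum fun j _ => mul_le_mul_of_nonneg_left (p_le_one _) (hc j)
      _ = 1 := by simpa using hs

variable {d : ℕ}

/-- `tr p(B)` (real part extracted). -/
noncomputable def F (B : Matrix (Fin d) (Fin d) ℂ) : ℝ := (matFun p B).trace.re

/-- The `i`-th diagonal quadratic form `Re (Vᴴ B V)_{ii}`, written as explicit sum. -/
noncomputable def qf (V B : Matrix (Fin d) (Fin d) ℂ) (i : Fin d) : ℝ :=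
  ∑ k, ∑ l, (star (V k i) * B k l * V l i).re

/-- The comparison quantity `∑ i p(Re (Vᴴ B V)_{ii})`. -/
noncomputable def g (V B : Matrix (Fin d) (Fin d) ℂ) : ℝ := ∑ i, p (qf V B i)

lemma qf_eq (V B : Matrix (Fin d) (Fin d) ℂ) (i : Fin d) :
    qf V B i = ((Vᴴ * B * V) i i).re := by
  simp only [qf, Matrix.mul_apply, Matrix.conjTranspose_apply]
  rw [Finset.sum_comm]
  simp only [Finset.sum_mul, Complex.re_sum]

lemma F_eq {B : Matrix (Fin d) (Fin d) ℂ} (hB : B.IsHermitian) :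
    F B = ∑ j, p (hB.eigenvalues j) := by
  have h : matFun p B =
      (hB.eigenvectorUnitary : Matrix (Fin d) (Fin d) ℂ) *
        Matrix.diagonal (fun i => (p (hB.eigenvalues i) : ℂ)) *
        (hB.eigenvectorUnitary : Matrix (Fin d) (Fin d) ℂ)ᴴ := by
    rw [matFun, dif_pos hB]
  have hU : ((hB.eigenvectorUnitary : Matrix (Fin d) (Fin d) ℂ))ᴴ *
      (hB.eigenvectorUnitary : Matrix (Fin d) (Fin d) ℂ) = 1 := by
    rw [← Matrix.star_eq_conjTranspose]
    exact (Matrix.mem_unitaryGroup_iff'.mp hB.eigenvectorUnitary.2)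
  rw [F, h, Matrix.trace_mul_cycle, hU, Matrix.one_mul,
    Matrix.trace_diagonal]
  simp [Complex.re_sum]

lemma F_le_g {B : Matrix (Fin d) (Fin d) ℂ} (hB : B.IsHermitian)
    {V : Matrix (Fin d) (Fin d) ℂ} (hV : V ∈ Matrix.unitaryGroup (Fin d) ℂ) :
    F B ≤ g V B := by
  classical
  set W : Matrix (Fin d) (Fin d) ℂ := (hB.eigenvectorUnitary : Matrix (Fin d) (Fin d) ℂ) with hW
  set X : Matrix (Fin d) (Fin d) ℂ := Vᴴ * W with hXdef
  have hXmem : X ∈ Matrix.unitaryGroup (Fin d) ℂ := by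
    rw [hXdef, ← Matrix.star_eq_conjTranspose]
    exact mul_mem (Unitary.star_mem hV) hB.eigenvectorUnitary.2
  have hX1 : X * Xᴴ = 1 := by
    rw [← Matrix.star_eq_conjTranspose]; exact Matrix.mem_unitaryGroup_iff.mp hXmem
  have hX2 : Xᴴ * X = 1 := by
    rw [← Matrix.star_eq_conjTranspose]; exact Matrix.mem_unitaryGroup_iff'.mp hXmem
  set c : Fin d → Fin d → ℝ := fun i j => Complex.normSq (X i j) with hc
  have hrow : ∀ i, ∑ j, c i j = 1 := by
    intro i
    have h1 : (X * Xᴴ) i i = 1 := by rw [hX1]; simp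
    have h2 : (X * Xᴴ) i i = ∑ j, (Complex.normSq (X i j) : ℂ) := by
      simp [Matrix.mul_apply, Matrix.conjTranspose_apply, Complex.mul_conj]
    rw [h2] at h1
    have := congrArg Complex.re h1
    simpa [Complex.re_sum] using this
  have hcol : ∀ j, ∑ i, c i j = 1 := by
    intro j
    have h1 : (Xᴴ * X) j j = 1 := by rw [hX2]; simp
    have h2 : (Xᴴ * X) j j = ∑ i, (Complex.normSq (X i j) : ℂ) := by
      simp [Matrix.mul_apply, Matrix.conjTranspose_apply]
      congr 1; funext i
      rw [mul_comm, Complex.mul_conj]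
    rw [h2] at h1
    have := congrArg Complex.re h1
    simpa [Complex.re_sum] using this
  have hspec : B = W * Matrix.diagonal (RCLike.ofReal ∘ hB.eigenvalues) * Wᴴ := by
    rw [← Matrix.star_eq_conjTranspose]; exact hB.spectral_theorem
  have hXH : Xᴴ = Wᴴ * V := by
    rw [hXdef, Matrix.conjTranspose_mul, Matrix.conjTranspose_conjTranspose]
  have hVBV : Vᴴ * B * V = X * Matrix.diagonal (RCLike.ofReal ∘ hB.eigenvalues) * Xᴴ := by
    rw [hXH, hXdef]; conv_lhs => rw [hspec]
    simp only [Matrix.mul_assoc]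
  have hdiag : ∀ i, ((Vᴴ * B * V) i i).re
      = ∑ j, c i j * hB.eigenvalues j := by
    intro i
    rw [hVBV]
    have : (X * Matrix.diagonal ((RCLike.ofReal ∘ hB.eigenvalues : Fin d → ℂ)) * Xᴴ) i i
        = ∑ j, ((Complex.normSq (X i j) * hB.eigenvalues j : ℝ) : ℂ) := by
      simp only [Matrix.mul_apply, Matrix.conjTranspose_apply, Matrix.diagonal_apply,
        Finset.sum_mul]
      rw [Finset.sum_comm]
      refine Finset.sum_congr rfl fun j _ => ?_
      rw [Finset.sum_eq_single j]
      · have h1 : X i j * star (X i j) = (Complex.normSq (X i j) : ℂ) := Complex.mul_conj _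
        have h2 : ((RCLike.ofReal ∘ hB.eigenvalues) j : ℂ) = ((hB.eigenvalues j : ℝ) : ℂ) := rfl
        simp only [if_pos rfl, if_true, h2]
        rw [show X i j * ((hB.eigenvalues j : ℝ) : ℂ) * star (X i j)
            = (X i j * star (X i j)) * ((hB.eigenvalues j : ℝ) : ℂ) by ring, h1]
        push_cast
        ring
      · intro b _ hbj; simp [Ne.symm hbj]
      · simp
    rw [this]
    simp [Complex.re_sum]; rfl
  have hqf : ∀ i, qf V B i = ∑ j, c i j * hB.eigenvalues j := by
    intro i; rw [qf_eq, hdiag]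
  have hc0 : ∀ i j, 0 ≤ c i j := fun i j => Complex.normSq_nonneg _
  rw [F_eq hB, g]
  calc ∑ j, p (hB.eigenvalues j)
      = ∑ j, (∑ i, c i j) * p (hB.eigenvalues j) := by
        refine Finset.sum_congr rfl fun j _ => ?_; rw [hcol j, one_mul]
    _ = ∑ i, ∑ j, c i j * p (hB.eigenvalues j) := by
        rw [Finset.sum_comm]
        simp [Finset.sum_mul]
    _ ≤ ∑ i, p (∑ j, c i j * hB.eigenvalues j) :=
        Finset.sum_le_sum fun i _ => sum_mul_p_le _ _ (hc0 i) (hrow i)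
    _ = ∑ i, p (qf V B i) := by
        refine Finset.sum_congr rfl fun i _ => ?_; rw [hqf i]

lemma qf_eigen {B : Matrix (Fin d) (Fin d) ℂ} (hB : B.IsHermitian) (i : Fin d) :
    qf (hB.eigenvectorUnitary : Matrix (Fin d) (Fin d) ℂ) B i = hB.eigenvalues i := by
  rw [qf_eq]
  have h : (hB.eigenvectorUnitary : Matrix (Fin d) (Fin d) ℂ)ᴴ * B *
      (hB.eigenvectorUnitary : Matrix (Fin d) (Fin d) ℂ)
      = Matrix.diagonal (RCLike.ofReal ∘ hB.eigenvalues) := by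
    rw [← Matrix.star_eq_conjTranspose]; simpa using hB.conjStarAlgAut_star_eigenvectorUnitary
  rw [h]
  simp [Matrix.diagonal_apply_eq]

lemma g_eigen {B : Matrix (Fin d) (Fin d) ℂ} (hB : B.IsHermitian) :
    g (hB.eigenvectorUnitary : Matrix (Fin d) (Fin d) ℂ) B = F B := by
  rw [g, F_eq hB]
  exact Finset.sum_congr rfl fun i _ => by rw [qf_eigen hB i]

/-- Sum of absolute values of entries. -/
noncomputable def En (B : Matrix (Fin d) (Fin d) ℂ) : ℝ := ∑ k, ∑ l, ‖B k l‖

lemma abs_qf_eigen_le {B : Matrix (Fin d) (Fin d) ℂ} (hB : B.IsHermitian) (i : Fin d) :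
    |hB.eigenvalues i| ≤ En B := by
  classical
  set W : Matrix (Fin d) (Fin d) ℂ := (hB.eigenvectorUnitary : Matrix (Fin d) (Fin d) ℂ) with hWdef
  have hW2 : Wᴴ * W = 1 := by
    rw [← Matrix.star_eq_conjTranspose]
    exact Matrix.mem_unitaryGroup_iff'.mp hB.eigenvectorUnitary.2
  have hWcol : ∀ k i : Fin d, ‖W k i‖ ≤ 1 := by
    intro k i
    have h1 : (Wᴴ * W) i i = 1 := by rw [hW2]; simp
    have h2 : (Wᴴ * W) i i = ∑ m, (Complex.normSq (W m i) : ℂ) := by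
      simp [Matrix.mul_apply, Matrix.conjTranspose_apply]
      congr 1; funext m
      rw [mul_comm, Complex.mul_conj]
    rw [h2] at h1
    have h3 : ∑ m, Complex.normSq (W m i) = 1 := by
      have := congrArg Complex.re h1
      simpa [Complex.re_sum] using this
    have h4 : Complex.normSq (W k i) ≤ 1 := by
      rw [← h3]
      exact Finset.single_le_sum (f := fun m => Complex.normSq (W m i)) (fun m _ => Complex.normSq_nonneg _) (Finset.mem_univ k)
    have h5 := Complex.sq_norm (W k i)
    nlinarith [norm_nonneg (W k i)]
  have := qf_eigen hB i
  rw [← this, qf]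
  calc |∑ k, ∑ l, (star (W k i) * B k l * W l i).re|
      ≤ ∑ k, ∑ l, |(star (W k i) * B k l * W l i).re| := by
        refine (Finset.abs_sum_le_sum_abs _ _).trans ?_
        exact Finset.sum_le_sum fun k _ => Finset.abs_sum_le_sum_abs _ _
    _ ≤ ∑ k, ∑ l, ‖B k l‖ := by
        refine Finset.sum_le_sum fun k _ => Finset.sum_le_sum fun l _ => ?_
        refine (Complex.abs_re_le_norm _).trans ?_
        rw [norm_mul, norm_mul]
        have hstar : ‖star (W k i)‖ = ‖W k i‖ := norm_star _
        rw [hstar]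
        calc ‖W k i‖ * ‖B k l‖ * ‖W l i‖
            ≤ 1 * ‖B k l‖ * 1 :=
              mul_le_mul (mul_le_mul (hWcol k i) le_rfl (norm_nonneg _) zero_le_one)
                (hWcol l i) (norm_nonneg _) (by positivity)
          _ = ‖B k l‖ := by ring
    _ = En B := rfl

lemma abs_F_le {B : Matrix (Fin d) (Fin d) ℂ} (hB : B.IsHermitian) :
    |F B| ≤ d * (1 + En B) := by
  rw [F_eq hB]
  calc |∑ j, p (hB.eigenvalues j)| ≤ ∑ j, |p (hB.eigenvalues j)| :=
        Finset.abs_sum_le_sum_abs _ _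
    _ ≤ ∑ _j : Fin d, (1 + En B) := by
        refine Finset.sum_le_sum fun j _ => (abs_p_le _).trans ?_
        have := abs_qf_eigen_le hB j
        linarith
    _ = d * (1 + En B) := by simp [mul_add, mul_comm]

lemma continuous_g (B : Matrix (Fin d) (Fin d) ℂ) :
    Continuous fun V : Matrix (Fin d) (Fin d) ℂ => g V B := by
  refine continuous_finset_sum _ fun i _ => ?_
  refine Continuous.min ?_ continuous_const
  refine Continuous.neg ?_
  refine continuous_finset_sum _ fun k _ => continuous_finset_sum _ fun l _ => ?_
  exact Complex.continuous_re.comp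
    ((((continuous_id.matrix_elem k i).star.mul continuous_const).mul
      (continuous_id.matrix_elem l i)))

lemma F_eq_iInf {D : Set ↥(Matrix.unitaryGroup (Fin d) ℂ)} (hDd : Dense D) [Nonempty ↥D]
    {B : Matrix (Fin d) (Fin d) ℂ} (hB : B.IsHermitian) :
    F B = ⨅ V : D, g (V : Matrix (Fin d) (Fin d) ℂ) B := by
  have hbdd : BddBelow (Set.range fun V : D => g (V : Matrix (Fin d) (Fin d) ℂ) B) := by
    refine ⟨F B, ?_⟩
    rintro x ⟨V, rfl⟩
    exact F_le_g hB V.1.2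
  refine le_antisymm (le_ciInf fun V => F_le_g hB V.1.2) ?_
  rw [← g_eigen hB]
  by_contra h
  push_neg at h
  have hcont : Continuous fun V : ↥(Matrix.unitaryGroup (Fin d) ℂ) =>
      g (V : Matrix (Fin d) (Fin d) ℂ) B :=
    (continuous_g B).comp continuous_subtype_val
  have hopen : IsOpen {V : ↥(Matrix.unitaryGroup (Fin d) ℂ) |
      g (V : Matrix (Fin d) (Fin d) ℂ) B < ⨅ V : D, g (V : Matrix (Fin d) (Fin d) ℂ) B} :=
    isOpen_lt hcont continuous_const
  obtain ⟨V₀, hV₀D, hV₀⟩ := hDd.exists_mem_open hopen ⟨hB.eigenvectorUnitary, h⟩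
  exact lt_irrefl _ (lt_of_le_of_lt (ciInf_le hbdd ⟨V₀, hV₀D⟩) hV₀)

section Meas

variable {Ω : Type*} [MeasurableSpace Ω] {μ : Measure Ω}

lemma measurable_qf_comp (V : Matrix (Fin d) (Fin d) ℂ) {Y : Ω → Matrix (Fin d) (Fin d) ℂ}
    (hmeas : ∀ i j, Measurable fun ω => Y ω i j) (i : Fin d) :
    Measurable fun ω => qf V (Y ω) i := by
  refine Finset.measurable_sum _ fun k _ => Finset.measurable_sum _ fun l _ => ?_
  exact Complex.measurable_re.comp (((hmeas k l).const_mul _).mul_const _)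

lemma measurable_g_comp (V : Matrix (Fin d) (Fin d) ℂ) {Y : Ω → Matrix (Fin d) (Fin d) ℂ}
    (hmeas : ∀ i j, Measurable fun ω => Y ω i j) :
    Measurable fun ω => g V (Y ω) := by
  refine Finset.measurable_sum _ fun i _ => ?_
  exact ((measurable_qf_comp V hmeas i).neg.min measurable_const)

lemma integrable_p_comp [IsFiniteMeasure μ] {q : Ω → ℝ} (hq : Integrable q μ) (hqm : Measurable q) :
    Integrable (fun ω => p (q ω)) μ := by
  refine Integrable.mono' ((integrable_const (1:ℝ)).add hq.abs)
    ((hqm.neg.min measurable_const).aestronglyMeasurable) ?_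
  refine Filter.Eventually.of_forall fun ω => ?_
  simpa [Real.norm_eq_abs] using abs_p_le (q ω)

lemma integral_p_le [IsProbabilityMeasure μ] {q : Ω → ℝ}
    (hq : Integrable q μ) (hqm : Measurable q) :
    ∫ ω, p (q ω) ∂μ ≤ p (∫ ω, q ω ∂μ) := by
  have hint := integrable_p_comp (μ := μ) hq hqm
  refine le_min ?_ ?_
  · calc ∫ ω, p (q ω) ∂μ ≤ ∫ ω, -q ω ∂μ := integral_mono hint hq.neg fun ω => p_le_neg _
      _ = -∫ ω, q ω ∂μ := integral_neg _
  · calc ∫ ω, p (q ω) ∂μ ≤ ∫ _ω, (1:ℝ) ∂μ :=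
        integral_mono hint (integrable_const 1) fun ω => p_le_one _
      _ = 1 := by simp

end Meas

end TrPJ

open TrPJ
/-- $p(t) = \min(-t,1)$ is concave, and Jensen's inequality for $\mathrm{tr}\,p$. -/
theorem trace_p_jensen {d : ℕ} {Ω : Type*} [MeasurableSpace Ω]
    (μ : Measure Ω) [IsProbabilityMeasure μ]
    (Y : Ω → Matrix (Fin d) (Fin d) ℂ)
    (hherm : ∀ ω, (Y ω).IsHermitian)
    (hmeas : ∀ i j, Measurable fun ω => Y ω i j)
    (hint : ∀ i j, Integrable (fun ω => Y ω i j) μ) :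
    ConcaveOn ℝ Set.univ (fun t : ℝ => min (-t) 1) ∧
    ∫ ω, (matFun (fun t => min (-t) 1) (Y ω)).trace.re ∂μ
      ≤ (matFun (fun t => min (-t) 1)
          (Matrix.of fun i j => ∫ ω, Y ω i j ∂μ)).trace.re := by
  classical
  constructor
  · refine ⟨convex_univ, fun x _ y _ a b ha hb hab => ?_⟩
    simp only [smul_eq_mul]
    refine le_min ?_ ?_
    · have h1 : min (-x) 1 ≤ -x := min_le_left _ _
      have h2 : min (-y) 1 ≤ -y := min_le_left _ _
      nlinarith
    · have h1 : min (-x) 1 ≤ 1 := min_le_right _ _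
      have h2 : min (-y) 1 ≤ 1 := min_le_right _ _
      nlinarith
  -- main inequality
  set A : Matrix (Fin d) (Fin d) ℂ := Matrix.of fun i j => ∫ ω, Y ω i j ∂μ with hAdef
  have hAherm : A.IsHermitian := by
    rw [Matrix.IsHermitian]
    ext i j
    rw [Matrix.conjTranspose_apply]
    show star (∫ ω, Y ω j i ∂μ) = ∫ ω, Y ω i j ∂μ
    calc star (∫ ω, Y ω j i ∂μ) = ∫ ω, star (Y ω j i) ∂μ := (integral_conj (𝕜 := ℂ)).symm
      _ = ∫ ω, Y ω i j ∂μ := by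
          refine integral_congr_ae (Filter.Eventually.of_forall fun ω => ?_)
          have := hherm ω
          rw [Matrix.IsHermitian] at this
          calc star (Y ω j i) = (Y ω)ᴴ i j := (Matrix.conjTranspose_apply _ _ _).symm
            _ = Y ω i j := by rw [this]
  set V : Matrix (Fin d) (Fin d) ℂ := (hAherm.eigenvectorUnitary : Matrix (Fin d) (Fin d) ℂ)
    with hVdef
  have hVmem : V ∈ Matrix.unitaryGroup (Fin d) ℂ := hAherm.eigenvectorUnitary.2
  -- integrability of the quadratic forms
  have hterm_int : ∀ (i k l : Fin d),
      Integrable (fun ω => (star (V k i) * Y ω k l * V l i).re) μ := by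
    intro i k l
    have h1 : Integrable (fun ω => star (V k i) * Y ω k l * V l i) μ :=
      ((hint k l).const_mul _).mul_const _
    simpa using h1.re
  have hqf_int : ∀ i, Integrable (fun ω => qf V (Y ω) i) μ := fun i =>
    integrable_finset_sum _ fun k _ => integrable_finset_sum _ fun l _ => hterm_int i k l
  have hqf_meas : ∀ i, Measurable fun ω => qf V (Y ω) i := measurable_qf_comp V hmeas
  -- the integral of the quadratic form is the quadratic form of A
  have h_swap : ∀ i, ∫ ω, qf V (Y ω) i ∂μ = qf V A i := by
    intro i
    rw [show (fun ω => qf V (Y ω) i) = fun ω => ∑ k, ∑ l, (star (V k i) * Y ω k l * V l i).re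
      from rfl]
    rw [integral_finset_sum _ fun k _ =>
      integrable_finset_sum _ fun l _ => hterm_int i k l]
    rw [qf]
    refine Finset.sum_congr rfl fun k _ => ?_
    rw [integral_finset_sum _ fun l _ => hterm_int i k l]
    refine Finset.sum_congr rfl fun l _ => ?_
    have h1 : Integrable (fun ω => star (V k i) * Y ω k l * V l i) μ :=
      ((hint k l).const_mul _).mul_const _
    have h2 : ∫ ω, star (V k i) * Y ω k l * V l i ∂μ = star (V k i) * A k l * V l i := by
      rw [integral_mul_const, integral_const_mul]
      rfl
    calc ∫ ω, (star (V k i) * Y ω k l * V l i).re ∂μ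
        = ∫ ω, Complex.reCLM (star (V k i) * Y ω k l * V l i) ∂μ := rfl
      _ = Complex.reCLM (∫ ω, star (V k i) * Y ω k l * V l i ∂μ) :=
          ContinuousLinearMap.integral_comp_comm _ h1
      _ = (star (V k i) * A k l * V l i).re := by rw [h2]; rfl
  -- measurability of ω ↦ F (Y ω)
  haveI : Nonempty ↥(Matrix.unitaryGroup (Fin d) ℂ) := ⟨1⟩
  haveI : SecondCountableTopology (Matrix (Fin d) (Fin d) ℂ) :=
    inferInstanceAs (SecondCountableTopology ((Fin d) → (Fin d) → ℂ))
  haveI : SecondCountableTopology ↥(Matrix.unitaryGroup (Fin d) ℂ) :=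
    inferInstanceAs (SecondCountableTopology
      ↥({V | V ∈ Matrix.unitaryGroup (Fin d) ℂ} : Set (Matrix (Fin d) (Fin d) ℂ)))
  obtain ⟨D, hDc, hDd⟩ :=
    TopologicalSpace.exists_countable_dense ↥(Matrix.unitaryGroup (Fin d) ℂ)
  haveI := hDc.to_subtype
  haveI : Nonempty ↥D := (hDd.nonempty).to_subtype
  have hFrep : (fun ω => F (Y ω))
      = fun ω => ⨅ W : D, g ((W : ↥(Matrix.unitaryGroup (Fin d) ℂ)) : Matrix (Fin d) (Fin d) ℂ)
          (Y ω) :=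
    funext fun ω => F_eq_iInf hDd (hherm ω)
  have hFmeas : Measurable fun ω => F (Y ω) := by
    rw [hFrep]
    exact Measurable.iInf fun W => measurable_g_comp _ hmeas
  -- integrability of ω ↦ F (Y ω)
  have hEn_int : Integrable (fun ω => (d : ℝ) * (1 + En (Y ω))) μ := by
    refine Integrable.const_mul ?_ _
    refine (integrable_const (1:ℝ)).add ?_
    refine integrable_finset_sum _ fun k _ => integrable_finset_sum _ fun l _ => ?_
    simpa using (hint k l).norm
  have hFint : Integrable (fun ω => F (Y ω)) μ := by
    refine Integrable.mono' hEn_int hFmeas.aestronglyMeasurable ?_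
    refine Filter.Eventually.of_forall fun ω => ?_
    simpa [Real.norm_eq_abs] using abs_F_le (hherm ω)
  -- integrability of g V ∘ Y
  have hG_int : Integrable (fun ω => g V (Y ω)) μ :=
    integrable_finset_sum _ fun i _ => integrable_p_comp (hqf_int i) (hqf_meas i)
  -- conclude
  show ∫ ω, F (Y ω) ∂μ ≤ F A
  calc ∫ ω, F (Y ω) ∂μ
      ≤ ∫ ω, g V (Y ω) ∂μ :=
        integral_mono hFint hG_int fun ω => F_le_g (hherm ω) hVmem
    _ = ∑ i, ∫ ω, p (qf V (Y ω) i) ∂μ :=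
        integral_finset_sum _ fun i _ => integrable_p_comp (hqf_int i) (hqf_meas i)
    _ ≤ ∑ i, p (∫ ω, qf V (Y ω) i ∂μ) :=
        Finset.sum_le_sum fun i _ => integral_p_le (hqf_int i) (hqf_meas i)
    _ = ∑ i, p (qf V A i) := by
        refine Finset.sum_congr rfl fun i _ => ?_
        rw [h_swap i]
    _ = g V A := rfl
    _ = F A := g_eigen hAherm
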